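/- Let N be prime, M a positive integer with M² < N/2, and D = {−M+1,...,−1} ∪ {1,...,M−1}. Let B₀, B₁ ∈ {1,...,N-1}. Suppose (d₀,d₁) ∈ D × D matches with respect to (B₀,B₁) and is minimal, i.e., there is no (d₀',d₁') ∈ D × D matching with respect to (B₀,B₁) with (d₀',d₁') = c·(d₀,d₁) for a real c with 0 < |c| < 1. Then every (d₀',d₁') ∈ D × D that matches with respect to (B₀,B₁) is an integer multiple of (d₀,d₁). -/

import Mathlib

/-- `N` prime, `M > 0` with `M² < N/2`,
`D = {−M+1,...,−1} ∪ {1,...,M−1}` (i.e. `d ∈ D ↔ d ≠ 0 ∧ |d| < M`),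
`B₀, B₁ ∈ {1,...,N-1}`.  If `(d₀,d₁) ∈ D × D` matches w.r.t. `(B₀,B₁)`
(`d₀·B₀ ≡ d₁·B₁ (mod N)`) and is minimal (no matching `(d₀',d₁') ∈ D × D` is a
real multiple `c·(d₀,d₁)` with `0 < |c| < 1`), then every matching
`(d₀',d₁') ∈ D × D` is an integer multiple of `(d₀,d₁)`. -/
theorem minimal_match_generates (N M : ℕ) (hN : N.Prime) (hM : 0 < M)
    (hMN : 2 * (M : ℤ) ^ 2 < (N : ℤ))
    (B₀ B₁ : ℤ) (hB₀ : 1 ≤ B₀ ∧ B₀ < (N : ℤ)) (hB₁ : 1 ≤ B₁ ∧ B₁ < (N : ℤ))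
    (d₀ d₁ : ℤ) (hd₀ : d₀ ≠ 0 ∧ |d₀| < (M : ℤ)) (hd₁ : d₁ ≠ 0 ∧ |d₁| < (M : ℤ))
    (hmatch : d₀ * B₀ ≡ d₁ * B₁ [ZMOD (N : ℤ)])
    (hmin : ¬ ∃ (e₀ e₁ : ℤ) (c : ℝ), e₀ ≠ 0 ∧ |e₀| < (M : ℤ) ∧ e₁ ≠ 0 ∧ |e₁| < (M : ℤ) ∧
        (e₀ * B₀ ≡ e₁ * B₁ [ZMOD (N : ℤ)]) ∧ 0 < |c| ∧ |c| < 1 ∧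
        (e₀ : ℝ) = c * (d₀ : ℝ) ∧ (e₁ : ℝ) = c * (d₁ : ℝ)) :
    ∀ e₀ e₁ : ℤ, e₀ ≠ 0 → |e₀| < (M : ℤ) → e₁ ≠ 0 → |e₁| < (M : ℤ) →
      (e₀ * B₀ ≡ e₁ * B₁ [ZMOD (N : ℤ)]) →
      ∃ k : ℤ, e₀ = k * d₀ ∧ e₁ = k * d₁ := by
  intro e₀ e₁ he₀ he₀M he₁ he₁M he
  have hNprime : Prime (N : ℤ) := Nat.prime_iff_prime_int.mp hN
  have hNB₁ : ¬ (N : ℤ) ∣ B₁ := by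
    intro h
    have := Int.le_of_dvd (by linarith [hB₁.1]) h
    linarith [hB₁.2]
  -- cross product vanishes
  have hcross : e₀ * d₁ = e₁ * d₀ := by
    have h1 : (N : ℤ) ∣ d₁ * B₁ - d₀ * B₀ := hmatch.dvd
    have h2 : (N : ℤ) ∣ e₁ * B₁ - e₀ * B₀ := he.dvd
    have h3 : (N : ℤ) ∣ (e₀ * d₁ - e₁ * d₀) * B₁ := by
      have := (h1.mul_left e₀).sub (h2.mul_left d₀)
      have heq : e₀ * (d₁ * B₁ - d₀ * B₀) - d₀ * (e₁ * B₁ - e₀ * B₀)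
          = (e₀ * d₁ - e₁ * d₀) * B₁ := by ring
      rwa [heq] at this
    have h4 : (N : ℤ) ∣ e₀ * d₁ - e₁ * d₀ :=
      (hNprime.dvd_mul.mp h3).resolve_right hNB₁
    have hbound : |e₀ * d₁ - e₁ * d₀| < (N : ℤ) := by
      have h5 : |e₀ * d₁| < M ^ 2 := by
        rw [abs_mul]
        calc |e₀| * |d₁| < M * M := by
              apply mul_lt_mul' (le_of_lt he₀M) hd₁.2 (abs_nonneg _)
              exact_mod_cast hM
          _ = (M : ℤ) ^ 2 := by ring
      have h6 : |e₁ * d₀| < M ^ 2 := by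
        rw [abs_mul]
        calc |e₁| * |d₀| < M * M := by
              apply mul_lt_mul' (le_of_lt he₁M) hd₀.2 (abs_nonneg _)
              exact_mod_cast hM
          _ = (M : ℤ) ^ 2 := by ring
      calc |e₀ * d₁ - e₁ * d₀| ≤ |e₀ * d₁| + |e₁ * d₀| := abs_sub _ _
        _ < (N : ℤ) := by linarith
    have := Int.eq_zero_of_abs_lt_dvd h4 hbound
    linarith [this]
  -- gcd(d₀,d₁) = 1 by minimality
  have hgcd : Int.gcd d₀ d₁ = 1 := by
    by_contra hg
    set g : ℕ := Int.gcd d₀ d₁ with hgdef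
    have hgpos : 0 < g := Int.gcd_pos_of_ne_zero_left d₁ hd₀.1
    have hg2 : 2 ≤ g := by omega
    obtain ⟨p₀, hp₀⟩ : (g : ℤ) ∣ d₀ := Int.gcd_dvd_left _ _
    obtain ⟨p₁, hp₁⟩ : (g : ℤ) ∣ d₁ := Int.gcd_dvd_right _ _
    have hgz : (g : ℤ) ≠ 0 := by positivity
    have hp₀ne : p₀ ≠ 0 := by rintro rfl; simp at hp₀; exact hd₀.1 hp₀
    have hp₁ne : p₁ ≠ 0 := by rintro rfl; simp at hp₁; exact hd₁.1 hp₁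
    have hp₀M : |p₀| < (M : ℤ) := by
      have : |p₀| ≤ |d₀| := by
        rw [hp₀, abs_mul]
        nlinarith [abs_nonneg p₀, abs_of_nonneg (show (0:ℤ) ≤ g by positivity)]
      linarith [hd₀.2]
    have hp₁M : |p₁| < (M : ℤ) := by
      have : |p₁| ≤ |d₁| := by
        rw [hp₁, abs_mul]
        nlinarith [abs_nonneg p₁, abs_of_nonneg (show (0:ℤ) ≤ g by positivity)]
      linarith [hd₁.2]
    -- p matches
    have hcop : IsCoprime (N : ℤ) (g : ℤ) := by
      rw [hNprime.coprime_iff_not_dvd]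
      intro hdvd
      have hgle : (g : ℤ) ≤ |d₀| := by
        have h : (g : ℤ) ∣ |d₀| := (dvd_abs _ _).mpr (Int.gcd_dvd_left _ _)
        exact Int.le_of_dvd (abs_pos.mpr hd₀.1) h
      have := Int.le_of_dvd (by positivity) hdvd
      nlinarith [hd₀.2, (show (1:ℤ) ≤ M by exact_mod_cast hM)]
    have hpmatch : p₀ * B₀ ≡ p₁ * B₁ [ZMOD (N : ℤ)] := by
      have h1 : (N : ℤ) ∣ d₁ * B₁ - d₀ * B₀ := hmatch.dvd
      have h2 : (N : ℤ) ∣ (g : ℤ) * (p₁ * B₁ - p₀ * B₀) := by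
        have heq : (g : ℤ) * (p₁ * B₁ - p₀ * B₀) = d₁ * B₁ - d₀ * B₀ := by
          rw [hp₀, hp₁]; ring
        rw [heq]; exact h1
      have h3 : (N : ℤ) ∣ p₁ * B₁ - p₀ * B₀ :=
        hcop.dvd_of_dvd_mul_left h2
      exact Int.modEq_iff_dvd.mpr h3
    apply hmin
    refine ⟨p₀, p₁, (g : ℝ)⁻¹, hp₀ne, hp₀M, hp₁ne, hp₁M, hpmatch, ?_, ?_, ?_, ?_⟩
    · rw [abs_inv]; positivity
    · rw [abs_inv, abs_of_pos (show (0:ℝ) < g by positivity)]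
      rw [inv_lt_one_iff₀]
      right; exact_mod_cast hg2
    · have : (d₀ : ℝ) = (g : ℝ) * (p₀ : ℝ) := by exact_mod_cast congrArg (Int.cast : ℤ → ℝ) hp₀
      rw [this]
      field_simp
    · have : (d₁ : ℝ) = (g : ℝ) * (p₁ : ℝ) := by exact_mod_cast congrArg (Int.cast : ℤ → ℝ) hp₁
      rw [this]
      field_simp
  -- conclude
  have hcopd : IsCoprime d₀ d₁ := Int.isCoprime_iff_gcd_eq_one.mpr hgcd
  have hdvd : d₀ ∣ e₀ := by
    have : d₀ ∣ e₀ * d₁ := ⟨e₁, by linarith [hcross]⟩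
    exact hcopd.dvd_of_dvd_mul_right this
  obtain ⟨k, hk⟩ := hdvd
  refine ⟨k, by rw [hk]; ring, ?_⟩
  have h2 : d₀ * e₁ = d₀ * (k * d₁) := by rw [hk] at hcross; linear_combination -hcross
  exact mul_left_cancel₀ hd₀.1 h2
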